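/- Let (ξ_j^{(N)*})_{j=1}^N be the unique maximizer of T_N over the admissible simplex. Then ξ_N^{(N)*} > 0, i.e., the last element of the optimal finite sequence is strictly positive. -/

import Mathlib

open Real

lemma log2pos : (0:ℝ) < Real.log 2 := Real.log_pos (by norm_num)

lemma log_lb {x : ℝ} (hx : 0 < x) : x / (1 + x) < Real.log (1 + x) := by
  have h1 : (0:ℝ) < 1 + x := by linarith
  have h2 := Real.log_lt_sub_one_of_pos (x := 1/(1+x)) (by positivity)
    (by intro h; rw [div_eq_one_iff_eq (by linarith)] at h; linarith)
  rw [Real.log_div one_ne_zero (ne_of_gt h1), Real.log_one] at h2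
  have h4 : 1/(1+x) - 1 = -(x/(1+x)) := by field_simp; ring
  rw [h4] at h2; linarith

lemma logb_lb {x : ℝ} (hx : 0 < x) :
    x / ((1 + x) * Real.log 2) < Real.logb 2 (1 + x) := by
  rw [Real.logb, ← div_div]
  exact (div_lt_div_iff_of_pos_right log2pos).mpr (log_lb hx)

lemma logb_lb' {x y : ℝ} (hx : 0 ≤ x) (hxy : x ≤ y) :
    x / ((1 + y) * Real.log 2) ≤ Real.logb 2 (1 + x) := by
  rcases eq_or_lt_of_le hx with h | h
  · simp [← h]
  · have h1 : x / ((1 + y) * Real.log 2) ≤ x / ((1 + x) * Real.log 2) := by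
      apply div_le_div_of_nonneg_left hx (by positivity)
      nlinarith [log2pos]
    exact h1.trans (logb_lb h).le

lemma logb_diff_le {a b : ℝ} (hb : 0 ≤ b) (hab : b ≤ a) :
    Real.logb 2 (1 + a) - Real.logb 2 (1 + b) ≤ (a - b) / ((1 + b) * Real.log 2) := by
  have hb1 : (0:ℝ) < 1 + b := by linarith
  have ha1 : (0:ℝ) < 1 + a := by linarith
  have h2 := Real.log_le_sub_one_of_pos (x := (1+a)/(1+b)) (by positivity)
  rw [Real.log_div (ne_of_gt ha1) (ne_of_gt hb1)] at h2
  have h3 : (1+a)/(1+b) - 1 = (a - b)/(1+b) := by field_simp; ring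
  rw [h3] at h2
  rw [Real.logb, Real.logb, div_sub_div_same, ← div_div]
  exact div_le_div_of_nonneg_right h2 log2pos.le

lemma geom_Icc (r : ℝ) : ∀ n m : ℕ, m ≤ n + 1 →
    (1 - r) * ∑ k ∈ Finset.Icc m n, r ^ k = r ^ m - r ^ (n + 1) := by
  intro n
  induction n with
  | zero => intro m hm; interval_cases m <;> simp
  | succ n ih =>
    intro m hm
    rcases Nat.lt_or_ge m (n + 2) with h | h
    · have hm' : m ≤ n + 1 := by omega
      rw [Finset.sum_Icc_succ_top hm', mul_add, ih m hm']
      ring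
    · have : m = n + 2 := by omega
      subst this
      simp [Finset.Icc_eq_empty_of_lt (by omega : n + 1 < n + 2)]

lemma final_B (w aj aN L1 L2 L3 X Y : ℝ)
    (hajpos : 0 < aj) (haNpos : 0 < aN) (hajN : aN ≤ aj) (hw : 0 ≤ w)
    (hL1 : X < L1) (hL2 : Y ≤ L2) (hL3 : L3 - L1 ≤ X) (hXY : w * Y = X) :
    0 < (aj * (L1 - L3) + aN * L1) + (w * (aj - aN)) * L2 := by
  have e1 := mul_lt_mul_of_pos_left hL1 haNpos
  have e2 := mul_le_mul_of_nonneg_left hL2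
    (mul_nonneg hw (by linarith : (0:ℝ) ≤ aj - aN))
  have e3 := mul_le_mul_of_nonneg_left hL3 hajpos.le
  have e4 : (w * (aj - aN)) * Y = (aj - aN) * X := by rw [← hXY]; ring
  linarith [e1, e2, e3, e4]


/-- The finite-horizon throughput functional `T_N` (log base 2), evaluated at a
sequence indexed from 1 (only coordinates `1,…,N` matter). -/
noncomputable def TN (B γ p : ℝ) (w N : ℕ) (ξ : ℕ → ℝ) : ℝ :=
  (∑ k ∈ Finset.Icc 1 w, p ^ 2 * (1 - p) ^ (k - 1) * ((k : ℝ) / 2) *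
      Real.logb 2 (1 + γ * B / k))
  + (∑ j ∈ Finset.Icc 1 N, p * (1 - p) ^ (j + w - 1) * (1 / 2) *
      Real.logb 2 (1 + γ * ξ j))
  + (∑ k ∈ Finset.Icc 1 N, p ^ 2 * (1 - p) ^ (k + w - 1) * ((w : ℝ) / 2) *
      Real.logb 2 (1 + (γ / w) * (B - ∑ j ∈ Finset.Icc 1 k, ξ j)))
  + p * (1 - p) ^ (w + N) * ((w : ℝ) / 2) *
      Real.logb 2 (1 + (γ / w) * (B - ∑ j ∈ Finset.Icc 1 N, ξ j))

/-- The admissible simplex `{ξ : ξ_j ≥ 0, ∑_{j=1}^N ξ_j ≤ B}`, as sequences supported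
on coordinates `1,…,N`. -/
def adm (B : ℝ) (N : ℕ) : Set (ℕ → ℝ) :=
  {ξ | (∀ j, 1 ≤ j → j ≤ N → 0 ≤ ξ j) ∧ (∀ j, j = 0 ∨ N < j → ξ j = 0)
      ∧ ∑ j ∈ Finset.Icc 1 N, ξ j ≤ B}

set_option maxHeartbeats 2000000 in
/-- The last element of the optimal finite sequence (the maximizer of `T_N` over the
admissible simplex) is strictly positive. -/
theorem TN_maximizer_last_pos (B γ p : ℝ) (w N : ℕ) (hB : 0 < B) (hγ : 0 < γ)
    (hw : 1 ≤ w) (hp : 0 < p) (hp1 : p < 1) (hN : 1 ≤ N) (ξ : ℕ → ℝ)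
    (hξ : ξ ∈ adm B N) (hmax : ∀ η ∈ adm B N, TN B γ p w N η ≤ TN B γ p w N ξ) :
    0 < ξ N := by
  obtain ⟨hpos, hzero, hsum⟩ := hξ
  by_contra hcon
  push_neg at hcon
  have hξ0 : ξ N = 0 := le_antisymm hcon (hpos N hN le_rfl)
  have hNmem : N ∈ Finset.Icc 1 N := Finset.mem_Icc.mpr ⟨hN, le_rfl⟩
  have hwR : (0:ℝ) < (w:ℝ) := by exact_mod_cast Nat.lt_of_lt_of_le Nat.zero_lt_one hw
  have hq : (0:ℝ) < 1 - p := by linarith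
  set S := ∑ j ∈ Finset.Icc 1 N, ξ j with hSdef
  rcases lt_or_eq_of_le hsum with hSB | hSB
  · -- Case A : S < B
    set ε := (B - S)/((w:ℝ)+1) with hεdef
    have hε : 0 < ε := by
      rw [hεdef]
      apply div_pos (by linarith) (by positivity)
    have hε1 : B - S = ((w:ℝ)+1)*ε := by
      rw [hεdef]; field_simp
    set η : ℕ → ℝ := fun i => if i = N then ε else ξ i with hηdef
    have hηsum : ∑ i ∈ Finset.Icc 1 N, η i = S + ε := by
      have h1 : ∑ i ∈ Finset.Icc 1 N, (η i - ξ i) = ε := by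
        rw [Finset.sum_eq_single N (fun i _ hne => by simp [hηdef, hne])
          (fun h => absurd hNmem h)]
        simp [hηdef, hξ0]
      rw [Finset.sum_sub_distrib] at h1
      linarith
    have hηadm : η ∈ adm B N := by
      refine ⟨fun i h1 h2 => ?_, fun i hi => ?_, ?_⟩
      · by_cases hi : i = N
        · simp [hηdef, hi]; exact hε.le
        · simp [hηdef, hi]; exact hpos i h1 h2
      · have hiN : i ≠ N := by rcases hi with h | h <;> omega
        simp [hηdef, hiN]; exact hzero i hi
      · rw [hηsum]; nlinarith
    have hps : ∀ k ∈ Finset.Icc 1 N, k ≠ N →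
        ∑ i ∈ Finset.Icc 1 k, η i = ∑ i ∈ Finset.Icc 1 k, ξ i := by
      intro k hk hkN
      apply Finset.sum_congr rfl
      intro i hi
      rw [Finset.mem_Icc] at hi hk
      have : i ≠ N := by omega
      simp [hηdef, this]
    have h2 : (∑ i ∈ Finset.Icc 1 N, p * (1 - p) ^ (i + w - 1) * (1 / 2) *
          Real.logb 2 (1 + γ * η i))
        - (∑ i ∈ Finset.Icc 1 N, p * (1 - p) ^ (i + w - 1) * (1 / 2) *
          Real.logb 2 (1 + γ * ξ i))
        = p * (1 - p) ^ (N + w - 1) * (1 / 2) * Real.logb 2 (1 + γ * ε) := by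
      rw [← Finset.sum_sub_distrib,
        Finset.sum_eq_single N (fun i _ hne => by simp [hηdef, hne])
          (fun h => absurd hNmem h)]
      simp [hηdef, hξ0]
    have h3 : (∑ k ∈ Finset.Icc 1 N, p ^ 2 * (1 - p) ^ (k + w - 1) * ((w:ℝ)/2) *
          Real.logb 2 (1 + (γ / w) * (B - ∑ i ∈ Finset.Icc 1 k, η i)))
        - (∑ k ∈ Finset.Icc 1 N, p ^ 2 * (1 - p) ^ (k + w - 1) * ((w:ℝ)/2) *
          Real.logb 2 (1 + (γ / w) * (B - ∑ i ∈ Finset.Icc 1 k, ξ i)))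
        = p ^ 2 * (1 - p) ^ (N + w - 1) * ((w:ℝ)/2) *
          (Real.logb 2 (1 + (γ / w) * (B - (S + ε)))
            - Real.logb 2 (1 + (γ / w) * (B - S))) := by
      rw [← Finset.sum_sub_distrib,
        Finset.sum_eq_single N (fun i hi hne => by rw [hps i hi hne]; ring)
          (fun h => absurd hNmem h)]
      rw [hηsum, ← hSdef]
      ring
    have hdiff : TN B γ p w N η - TN B γ p w N ξ =
        p * (1 - p) ^ (N + w - 1) * (1 / 2) * Real.logb 2 (1 + γ * ε)
        + (p ^ 2 * (1 - p) ^ (N + w - 1) * ((w:ℝ)/2)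
            + p * (1 - p) ^ (w + N) * ((w:ℝ)/2)) *
          (Real.logb 2 (1 + (γ / w) * (B - (S + ε)))
            - Real.logb 2 (1 + (γ / w) * (B - S))) := by
      unfold TN
      rw [hηsum, ← hSdef]
      linear_combination h2 + h3
    have hveq : (γ / (w:ℝ)) * (B - (S + ε)) = γ * ε := by
      have : B - (S + ε) = (w:ℝ) * ε := by linarith
      rw [this]; field_simp
    have hueq : γ / (w:ℝ) * (B - S) - γ * ε = γ * ε / w := by
      rw [hε1]; field_simp; ring
    rw [hveq] at hdiff
    have hpow : ((1:ℝ) - p) ^ (w + N) = (1 - p) ^ (N + w - 1) * (1 - p) := by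
      rw [← pow_succ]; congr 1; omega
    have hL1 : γ * ε / ((1 + γ * ε) * Real.log 2) < Real.logb 2 (1 + γ * ε) :=
      logb_lb (by positivity)
    have hLd : Real.logb 2 (1 + γ / (w:ℝ) * (B - S)) - Real.logb 2 (1 + γ * ε)
        ≤ (γ * ε / w) / ((1 + γ * ε) * Real.log 2) := by
      have hblea : γ * ε ≤ γ / (w:ℝ) * (B - S) := by
        have h0 : (0:ℝ) ≤ γ * ε / w := by positivity
        linarith
      have := logb_diff_le (a := γ / (w:ℝ) * (B - S)) (b := γ * ε)
        (by positivity) hblea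
      rw [hueq] at this
      exact this
    -- final contradiction
    have hle := hmax η hηadm
    have hApos : (0:ℝ) < p * (1 - p) ^ (N + w - 1) * (1 / 2) := by positivity
    have hCD : (0:ℝ) ≤ p ^ 2 * (1 - p) ^ (N + w - 1) * ((w:ℝ)/2)
        + p * (1 - p) ^ (w + N) * ((w:ℝ)/2) := by positivity
    have e1 := mul_lt_mul_of_pos_left hL1 hApos
    have e2 := mul_le_mul_of_nonneg_left hLd hCD
    have e4 : (p ^ 2 * (1 - p) ^ (N + w - 1) * ((w:ℝ)/2)
          + p * (1 - p) ^ (w + N) * ((w:ℝ)/2))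
          * ((γ * ε / w) / ((1 + γ * ε) * Real.log 2))
        = p * (1 - p) ^ (N + w - 1) * (1 / 2)
          * (γ * ε / ((1 + γ * ε) * Real.log 2)) := by
      rw [hpow]
      have hne1 : (1:ℝ) + γ * ε ≠ 0 := by positivity
      field_simp
      ring
    linarith [hdiff, e1, e2, e4]
  · -- Case B : S = B
    have hSNval : ∑ i ∈ Finset.Icc 1 N, ξ i = B := by rw [← hSdef]; exact hSB
    have hTne : ((Finset.Icc 1 N).filter fun i => ξ i ≠ 0).Nonempty := by
      by_contra h
      rw [Finset.not_nonempty_iff_eq_empty, Finset.filter_eq_empty_iff] at h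
      have h0 : ∑ i ∈ Finset.Icc 1 N, ξ i = 0 :=
        Finset.sum_eq_zero fun i hi => not_not.mp (h hi)
      rw [hSNval] at h0; linarith
    set j := ((Finset.Icc 1 N).filter fun i => ξ i ≠ 0).max' hTne with hjdef
    have hjmem := Finset.max'_mem _ hTne
    rw [← hjdef, Finset.mem_filter, Finset.mem_Icc] at hjmem
    obtain ⟨⟨hj1, hjN⟩, hjne⟩ := hjmem
    have hξj : 0 < ξ j := lt_of_le_of_ne (hpos j hj1 hjN) (Ne.symm hjne)
    have hjltN : j < N := lt_of_le_of_ne hjN (by intro h; exact hjne (h ▸ hξ0))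
    have hjneN : j ≠ N := Nat.ne_of_lt hjltN
    have htail : ∀ i, j < i → i ≤ N → ξ i = 0 := by
      intro i hji hiN
      by_contra hne
      have hmem : i ∈ (Finset.Icc 1 N).filter fun i => ξ i ≠ 0 :=
        Finset.mem_filter.mpr ⟨Finset.mem_Icc.mpr ⟨by omega, hiN⟩, hne⟩
      have := Finset.le_max' _ i hmem
      rw [← hjdef] at this
      omega
    set ε := ξ j / 2 with hεdef
    have hε : 0 < ε := by rw [hεdef]; positivity
    have hξj2 : ξ j = 2 * ε := by rw [hεdef]; ring
    set η : ℕ → ℝ := fun i => if i = j then ε else if i = N then ε else ξ i with hηdef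
    have hIcc : ∀ n : ℕ, Finset.Icc 1 n = Finset.Ioc 0 n := fun n => by
      rw [← Finset.Icc_add_one_left_eq_Ioc]; rfl
    have hSk : ∀ k, j ≤ k → k ≤ N → ∑ i ∈ Finset.Icc 1 k, ξ i = B := by
      intro k hjk hkN
      have hsplit : (∑ i ∈ Finset.Ioc 0 k, ξ i) + ∑ i ∈ Finset.Ioc k N, ξ i
          = ∑ i ∈ Finset.Ioc 0 N, ξ i :=
        Finset.sum_Ioc_consecutive _ (by omega) hkN
      have htl : ∑ i ∈ Finset.Ioc k N, ξ i = 0 :=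
        Finset.sum_eq_zero fun i hi => by
          rw [Finset.mem_Ioc] at hi
          exact htail i (by omega) hi.2
      have hSN : ∑ i ∈ Finset.Ioc 0 N, ξ i = B := by rw [← hIcc N]; exact hSNval
      rw [hIcc k]
      linarith
    have hηk_lt : ∀ k, k < j →
        ∑ i ∈ Finset.Icc 1 k, η i = ∑ i ∈ Finset.Icc 1 k, ξ i := by
      intro k hk
      apply Finset.sum_congr rfl
      intro i hi
      rw [Finset.mem_Icc] at hi
      have h1 : i ≠ j := by omega
      have h2 : i ≠ N := by omega
      simp [hηdef, h1, h2]
    have hηk_mid : ∀ k, j ≤ k → k < N → ∑ i ∈ Finset.Icc 1 k, η i = B - ε := by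
      intro k hjk hkN
      have h1 : ∑ i ∈ Finset.Icc 1 k, (η i - ξ i) = -ε := by
        rw [Finset.sum_eq_single j (fun i hi hne => by
            rw [Finset.mem_Icc] at hi
            have h2 : i ≠ N := by omega
            simp [hηdef, hne, h2])
          (fun h => absurd (Finset.mem_Icc.mpr ⟨by omega, hjk⟩) h)]
        simp [hηdef, hjneN]
        rw [hξj2]; ring
      rw [Finset.sum_sub_distrib] at h1
      have h2 := hSk k hjk (by omega)
      linarith
    have hsub : ({j, N} : Finset ℕ) ⊆ Finset.Icc 1 N := by
      intro i hi
      rw [Finset.mem_insert, Finset.mem_singleton] at hi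
      rw [Finset.mem_Icc]
      rcases hi with h | h <;> omega
    have hηk_N : ∑ i ∈ Finset.Icc 1 N, η i = B := by
      have h1 : ∑ i ∈ Finset.Icc 1 N, (η i - ξ i) = 0 := by
        rw [← Finset.sum_subset hsub (fun i _ hi => by
          rw [Finset.mem_insert, Finset.mem_singleton] at hi
          push_neg at hi
          simp [hηdef, hi.1, hi.2])]
        rw [Finset.sum_pair hjneN]
        simp [hηdef, hjneN, hξ0]
        rw [hξj2]; ring
      rw [Finset.sum_sub_distrib, hSNval] at h1
      linarith
    have hηadm : η ∈ adm B N := by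
      refine ⟨fun i h1 h2 => ?_, fun i hi => ?_, ?_⟩
      · by_cases hij : i = j
        · simp [hηdef, hij]; exact hε.le
        · by_cases hiN : i = N
          · simp [hηdef, hij, hiN]; exact hε.le
          · simp [hηdef, hij, hiN]; exact hpos i h1 h2
      · have h1 : i ≠ j := by rcases hi with h | h <;> omega
        have h2 : i ≠ N := by rcases hi with h | h <;> omega
        simp [hηdef, h1, h2]; exact hzero i hi
      · rw [hηk_N]
    have h2 : (∑ i ∈ Finset.Icc 1 N, p * (1 - p) ^ (i + w - 1) * (1 / 2) *
          Real.logb 2 (1 + γ * η i))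
        - (∑ i ∈ Finset.Icc 1 N, p * (1 - p) ^ (i + w - 1) * (1 / 2) *
          Real.logb 2 (1 + γ * ξ i))
        = p * (1 - p) ^ (j + w - 1) * (1 / 2) *
            (Real.logb 2 (1 + γ * ε) - Real.logb 2 (1 + γ * (2 * ε)))
          + p * (1 - p) ^ (N + w - 1) * (1 / 2) * Real.logb 2 (1 + γ * ε) := by
      rw [← Finset.sum_sub_distrib,
        ← Finset.sum_subset hsub (fun i _ hi => by
          rw [Finset.mem_insert, Finset.mem_singleton] at hi
          push_neg at hi
          simp [hηdef, hi.1, hi.2]),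
        Finset.sum_pair hjneN]
      have hηj : η j = ε := by simp [hηdef]
      have hηN : η N = ε := by simp [hηdef, hjneN]
      rw [hηj, hηN, hξ0, hξj2]
      simp
      ring
    have hsub3 : Finset.Icc j (N - 1) ⊆ Finset.Icc 1 N := by
      intro i hi
      rw [Finset.mem_Icc] at hi ⊢
      omega
    have h3 : (∑ k ∈ Finset.Icc 1 N, p ^ 2 * (1 - p) ^ (k + w - 1) * ((w:ℝ)/2) *
          Real.logb 2 (1 + (γ / w) * (B - ∑ i ∈ Finset.Icc 1 k, η i)))
        - (∑ k ∈ Finset.Icc 1 N, p ^ 2 * (1 - p) ^ (k + w - 1) * ((w:ℝ)/2) *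
          Real.logb 2 (1 + (γ / w) * (B - ∑ i ∈ Finset.Icc 1 k, ξ i)))
        = (∑ k ∈ Finset.Icc j (N - 1), p ^ 2 * (1 - p) ^ (k + w - 1) * ((w:ℝ)/2)) *
            Real.logb 2 (1 + (γ / w) * ε) := by
      rw [← Finset.sum_sub_distrib,
        ← Finset.sum_subset hsub3 (fun k hk hknot => by
          rw [Finset.mem_Icc] at hk hknot
          push_neg at hknot
          rcases Nat.lt_or_ge k j with hlt | hge
          · rw [hηk_lt k hlt]; ring
          · have hkN : k = N := by omega
            subst hkN
            rw [hηk_N, hSNval]; ring),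
        Finset.sum_mul]
      apply Finset.sum_congr rfl
      intro k hk
      rw [Finset.mem_Icc] at hk
      rw [hηk_mid k hk.1 (by omega), hSk k hk.1 (by omega)]
      have e1 : B - (B - ε) = ε := by ring
      have e2 : B - B = (0:ℝ) := by ring
      rw [e1, e2, mul_zero, add_zero, Real.logb_one]
      ring
    have hdiff : TN B γ p w N η - TN B γ p w N ξ =
        (p * (1 - p) ^ (j + w - 1) * (1 / 2) *
            (Real.logb 2 (1 + γ * ε) - Real.logb 2 (1 + γ * (2 * ε)))
          + p * (1 - p) ^ (N + w - 1) * (1 / 2) * Real.logb 2 (1 + γ * ε))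
        + (∑ k ∈ Finset.Icc j (N - 1), p ^ 2 * (1 - p) ^ (k + w - 1) * ((w:ℝ)/2)) *
            Real.logb 2 (1 + (γ / w) * ε) := by
      unfold TN
      rw [hηk_N, hSNval]
      linear_combination h2 + h3
    have hgeom : (∑ k ∈ Finset.Icc j (N - 1), p ^ 2 * (1 - p) ^ (k + w - 1) * ((w:ℝ)/2))
        = (w:ℝ) * (p * (1 - p) ^ (j + w - 1) * (1/2) - p * (1 - p) ^ (N + w - 1) * (1/2)) := by
      have hg := geom_Icc (1 - p) (N - 1) j (by omega)
      have hN1 : N - 1 + 1 = N := by omega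
      rw [hN1] at hg
      have h1p : (1:ℝ) - (1 - p) = p := by ring
      rw [h1p] at hg
      have hexp : ∀ k : ℕ, ((1:ℝ) - p) ^ (k + w - 1) = (1 - p) ^ k * (1 - p) ^ (w - 1) := by
        intro k
        rw [← pow_add]; congr 1; omega
      calc (∑ k ∈ Finset.Icc j (N - 1), p ^ 2 * (1 - p) ^ (k + w - 1) * ((w:ℝ)/2))
          = (p * (1 - p) ^ (w - 1) * ((w:ℝ)/2)) *
              (p * ∑ k ∈ Finset.Icc j (N - 1), (1 - p) ^ k) := by
            rw [Finset.mul_sum, Finset.mul_sum]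
            apply Finset.sum_congr rfl
            intro k _
            rw [hexp k]; ring
        _ = (p * (1 - p) ^ (w - 1) * ((w:ℝ)/2)) * ((1 - p) ^ j - (1 - p) ^ N) := by
            rw [hg]
        _ = _ := by rw [hexp j, hexp N]; ring
    rw [hgeom] at hdiff
    -- final contradiction
    have hle := hmax η hηadm
    clear_value S j ε η
    have hajpos : (0:ℝ) < p * (1 - p) ^ (j + w - 1) * (1/2) := by positivity
    have haNpos : (0:ℝ) < p * (1 - p) ^ (N + w - 1) * (1/2) := by positivity
    have hajN : p * (1 - p) ^ (N + w - 1) * (1/2) ≤ p * (1 - p) ^ (j + w - 1) * (1/2) := by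
      have h1 : ((1:ℝ) - p) ^ (N + w - 1) ≤ (1 - p) ^ (j + w - 1) :=
        pow_le_pow_of_le_one hq.le (by linarith) (by omega)
      exact mul_le_mul_of_nonneg_right (mul_le_mul_of_nonneg_left h1 hp.le)
        (by norm_num)
    have hL1 : γ * ε / ((1 + γ * ε) * Real.log 2) < Real.logb 2 (1 + γ * ε) :=
      logb_lb (by positivity)
    have hL2 : (γ / (w:ℝ)) * ε / ((1 + γ * ε) * Real.log 2)
        ≤ Real.logb 2 (1 + (γ / w) * ε) := by
      apply logb_lb' (by positivity)
      exact mul_le_mul_of_nonneg_right (div_le_self hγ.le (by exact_mod_cast hw)) hε.le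
    have hL3 : Real.logb 2 (1 + γ * (2 * ε)) - Real.logb 2 (1 + γ * ε)
        ≤ γ * ε / ((1 + γ * ε) * Real.log 2) := by
      have h1 := logb_diff_le (a := γ * (2 * ε)) (b := γ * ε) (by positivity)
        (by have := mul_pos hγ hε; nlinarith)
      have harith : γ * (2 * ε) - γ * ε = γ * ε := by ring
      rw [harith] at h1
      exact h1
    have hXY : (w:ℝ) * ((γ / (w:ℝ)) * ε / ((1 + γ * ε) * Real.log 2))
        = γ * ε / ((1 + γ * ε) * Real.log 2) := by
      have hne1 : (1:ℝ) + γ * ε ≠ 0 := by positivity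
      field_simp
    have key := final_B (w:ℝ) (p * (1 - p) ^ (j + w - 1) * (1/2))
      (p * (1 - p) ^ (N + w - 1) * (1/2))
      (Real.logb 2 (1 + γ * ε)) (Real.logb 2 (1 + (γ / w) * ε))
      (Real.logb 2 (1 + γ * (2 * ε)))
      (γ * ε / ((1 + γ * ε) * Real.log 2))
      ((γ / (w:ℝ)) * ε / ((1 + γ * ε) * Real.log 2))
      hajpos haNpos hajN hwR.le hL1 hL2 hL3 hXY
    linarith [hdiff, key, hle]
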